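/- arXiv:2312.09686 — 3 statements merged into one kernel-verified Lean document; each statement's English description precedes it below -/
import Mathlib

section
/- Let (X,Q,π) be a finite Markov chain with |X| ≥ 2 whose underlying graph (x ∼ y iff x ≠ y and Q(x,y) > 0) is connected. Then inf { ⟨𝟏, Γ₂ f⟩_π / ⟨𝟏, Γ f⟩_π : f : X → ℝ with ⟨𝟏, Γ f⟩_π > 0 } = λ₁(X), the smallest positive eigenvalue of −Δ (here 𝟏 denotes the constant function 1, so ⟨𝟏, g⟩_π = Σ_x g(x)π(x)). In other words, the curvature K_∞(𝟏_X) of the equilibrium measure equals λ₁(X). -/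
open Finset
open scoped RealInnerProductSpace

/-- The Markov chain Laplacian `Δf(x) = ∑_y Q(x,y)(f(y) - f(x))`. -/
def lap {X : Type*} [Fintype X] (Q : X → X → ℝ) (f : X → ℝ) : X → ℝ :=
  fun x => ∑ y, Q x y * (f y - f x)

/-- `Γ(f,g) := ½(Δ(fg) - fΔg - gΔf)`. -/
noncomputable def gamBil {X : Type*} [Fintype X] (Q : X → X → ℝ) (f g : X → ℝ) : X → ℝ :=
  fun x => (1/2) * (lap Q (fun z => f z * g z) x - f x * lap Q g x - g x * lap Q f x)

/-- `Γf := Γ(f,f)`. -/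
noncomputable def gam {X : Type*} [Fintype X] (Q : X → X → ℝ) (f : X → ℝ) : X → ℝ :=
  gamBil Q f f

/-- `Γ₂f := ½Δ(Γf) - Γ(f, Δf)`. -/
noncomputable def gam2 {X : Type*} [Fintype X] (Q : X → X → ℝ) (f : X → ℝ) : X → ℝ :=
  fun x => (1/2) * lap Q (gam Q f) x - gamBil Q f (lap Q f) x

section Aux
set_option linter.unusedSectionVars false
variable {X : Type*} [Fintype X] [DecidableEq X]
variable (Q : X → X → ℝ) (pr : X → ℝ)

lemma lap_eq (hQrow : ∀ x, ∑ y, Q x y = 1) (f : X → ℝ) (x : X) :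
    lap Q f x = (∑ y, Q x y * f y) - f x := by
  simp [lap, mul_sub, Finset.sum_sub_distrib, ← Finset.sum_mul, hQrow]

lemma double_sum_symm (hrev : ∀ x y, pr x * Q x y = pr y * Q y x) (f g : X → ℝ) :
    ∑ x, ∑ y, pr x * Q x y * f x * g y = ∑ x, ∑ y, pr x * Q x y * g x * f y := by
  rw [Finset.sum_comm]
  refine Finset.sum_congr rfl fun y _ => Finset.sum_congr rfl fun x _ => ?_
  rw [hrev x y]; ring

lemma lap_mean_zero (hQrow : ∀ x, ∑ y, Q x y = 1)
    (hrev : ∀ x y, pr x * Q x y = pr y * Q y x) (g : X → ℝ) :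
    ∑ x, lap Q g x * pr x = 0 := by
  have h1 : ∀ x, lap Q g x * pr x = (∑ y, pr x * Q x y * g y) - pr x * g x := by
    intro x
    rw [lap_eq Q hQrow, sub_mul, Finset.sum_mul]
    congr 1
    · exact Finset.sum_congr rfl fun y _ => by ring
    · ring
  simp only [h1]
  rw [Finset.sum_sub_distrib]
  have h2 : ∑ x, ∑ y, pr x * Q x y * g y = ∑ x, pr x * g x := by
    rw [Finset.sum_comm]
    refine Finset.sum_congr rfl fun y _ => ?_
    calc ∑ x, pr x * Q x y * g y = (∑ x, pr y * Q y x) * g y := by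
          rw [Finset.sum_mul]; exact Finset.sum_congr rfl fun x _ => by rw [hrev x y]
      _ = pr y * g y := by rw [← Finset.mul_sum, hQrow y, mul_one]
  rw [h2, sub_self]

lemma lap_selfadj (hQrow : ∀ x, ∑ y, Q x y = 1)
    (hrev : ∀ x y, pr x * Q x y = pr y * Q y x) (f g : X → ℝ) :
    ∑ x, f x * lap Q g x * pr x = ∑ x, g x * lap Q f x * pr x := by
  have key : ∀ h k : X → ℝ, ∑ x, h x * lap Q k x * pr x
      = (∑ x, ∑ y, pr x * Q x y * h x * k y) - ∑ x, pr x * h x * k x := by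
    intro h k
    rw [← Finset.sum_sub_distrib]
    refine Finset.sum_congr rfl fun x _ => ?_
    rw [lap_eq Q hQrow]
    rw [show h x * ((∑ y, Q x y * k y) - k x) * pr x
        = (∑ y, Q x y * k y) * (h x * pr x) - pr x * h x * k x by ring, Finset.sum_mul]
    congr 1
    exact Finset.sum_congr rfl fun y _ => by ring
  rw [key, key, double_sum_symm Q pr hrev]
  congr 1
  exact Finset.sum_congr rfl fun x _ => by ring

lemma gamBil_sum (hQrow : ∀ x, ∑ y, Q x y = 1)
    (hrev : ∀ x y, pr x * Q x y = pr y * Q y x) (f g : X → ℝ) :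
    ∑ x, gamBil Q f g x * pr x = -∑ x, f x * lap Q g x * pr x := by
  have expand : ∀ x, gamBil Q f g x * pr x = (1/2) * (lap Q (fun z => f z * g z) x * pr x)
      - (1/2) * (f x * lap Q g x * pr x) - (1/2) * (g x * lap Q f x * pr x) := by
    intro x; simp only [gamBil]; ring
  simp only [expand]
  rw [Finset.sum_sub_distrib, Finset.sum_sub_distrib, ← Finset.mul_sum, ← Finset.mul_sum,
    ← Finset.mul_sum, lap_mean_zero Q pr hQrow hrev, lap_selfadj Q pr hQrow hrev g f]
  ring

lemma gam_sum (hQrow : ∀ x, ∑ y, Q x y = 1)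
    (hrev : ∀ x y, pr x * Q x y = pr y * Q y x) (f : X → ℝ) :
    ∑ x, gam Q f x * pr x = -∑ x, f x * lap Q f x * pr x :=
  gamBil_sum Q pr hQrow hrev f f

lemma gam2_sum (hQrow : ∀ x, ∑ y, Q x y = 1)
    (hrev : ∀ x y, pr x * Q x y = pr y * Q y x) (f : X → ℝ) :
    ∑ x, gam2 Q f x * pr x = ∑ x, (lap Q f x)^2 * pr x := by
  have expand : ∀ x, gam2 Q f x * pr x = (1/2) * (lap Q (gam Q f) x * pr x)
      - gamBil Q f (lap Q f) x * pr x := by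
    intro x; simp only [gam2]; ring
  simp only [expand]
  rw [Finset.sum_sub_distrib, ← Finset.mul_sum, lap_mean_zero Q pr hQrow hrev,
    gamBil_sum Q pr hQrow hrev f (lap Q f), lap_selfadj Q pr hQrow hrev f (lap Q f)]
  have h : ∀ x : X, lap Q f x * lap Q f x * pr x = (lap Q f x)^2 * pr x := fun x => by ring
  simp only [h]
  ring

lemma gam_pointwise (f : X → ℝ) (x : X) :
    gam Q f x = (1/2) * ∑ y, Q x y * (f y - f x)^2 := by
  simp only [gam, gamBil, lap]
  congr 1
  rw [Finset.mul_sum, ← Finset.sum_sub_distrib, ← Finset.sum_sub_distrib]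
  exact Finset.sum_congr rfl fun y _ => by ring

end Aux

lemma spectral_ineq {E : Type*} [NormedAddCommGroup E] [InnerProductSpace ℝ E]
    [FiniteDimensional ℝ E] (T : E →ₗ[ℝ] E) (hsym : T.IsSymmetric) (lam : ℝ)
    (hmu : ∀ (μ : ℝ) (w : E), w ≠ 0 → T w = μ • w → 0 ≤ μ * (μ - lam)) (v : E) :
    lam * ⟪v, T v⟫ ≤ ⟪T v, T v⟫ := by
  have hn : Module.finrank ℝ E = Module.finrank ℝ E := rfl
  set b := hsym.eigenvectorBasis hn with hbdef
  set μ := hsym.eigenvalues hn with hmudef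
  have hb : ∀ i, T (b i) = μ i • b i := fun i => hsym.apply_eigenvectorBasis hn i
  have hc : ∀ (i) (w : E), ⟪b i, T w⟫ = μ i * ⟪b i, w⟫ := by
    intro i w
    rw [← hsym (b i) w, hb i, real_inner_smul_left]
  have h1 : ⟪v, T v⟫ = ∑ i, μ i * ⟪b i, v⟫ ^ 2 := by
    rw [← b.sum_inner_mul_inner v (T v)]
    refine Finset.sum_congr rfl fun i _ => ?_
    rw [hc, real_inner_comm v (b i)]; ring
  have h2 : ⟪T v, T v⟫ = ∑ i, μ i ^ 2 * ⟪b i, v⟫ ^ 2 := by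
    rw [← b.sum_inner_mul_inner (T v) (T v)]
    refine Finset.sum_congr rfl fun i _ => ?_
    have e : ⟪T v, b i⟫ = μ i * ⟪b i, v⟫ := by
      rw [hsym v (b i), hb, real_inner_smul_right, real_inner_comm v (b i)]
    rw [e, hc]; ring
  rw [h1, h2, Finset.mul_sum]
  refine Finset.sum_le_sum fun i _ => ?_
  have hb0 : b i ≠ 0 := by simpa using b.toBasis.ne_zero i
  have hkey := hmu (μ i) (b i) hb0 (hb i)
  nlinarith [mul_nonneg hkey (sq_nonneg (⟪b i, v⟫)), sq_nonneg (⟪b i, v⟫)]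


/-- The curvature `K_∞(𝟏_X)` of the equilibrium measure, i.e. the infimum of
`⟨𝟏, Γ₂f⟩_π / ⟨𝟏, Γf⟩_π` over all `f` with `⟨𝟏, Γf⟩_π > 0`, equals the smallest
positive eigenvalue `λ₁(X)` of `-Δ`. -/
theorem lambdaOne_as_curvature
    {X : Type*} [Fintype X] [DecidableEq X]
    (Q : X → X → ℝ) (pr : X → ℝ)
    (hQ : ∀ x y, 0 ≤ Q x y) (hQrow : ∀ x, ∑ y, Q x y = 1)
    (hpr : ∀ x, 0 < pr x) (hprsum : ∑ x, pr x = 1)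
    (hrev : ∀ x y, pr x * Q x y = pr y * Q y x)
    (hcard : 2 ≤ Fintype.card X)
    (hconn : ∀ x y : X, Relation.ReflTransGen (fun a b => a ≠ b ∧ 0 < Q a b) x y)
    (lam : ℝ) (hlam_pos : 0 < lam)
    (hlam_eig : ∃ f : X → ℝ, f ≠ 0 ∧ ∀ x, lap Q f x = -(lam * f x))
    (hlam_min : ∀ mu : ℝ, 0 < mu →
      (∃ f : X → ℝ, f ≠ 0 ∧ ∀ x, lap Q f x = -(mu * f x)) → lam ≤ mu) :
    sInf {r : ℝ | ∃ f : X → ℝ, 0 < ∑ x, gam Q f x * pr x ∧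
        r = (∑ x, gam2 Q f x * pr x) / (∑ x, gam Q f x * pr x)} = lam := by
  classical
  set Sset : Set ℝ := {r : ℝ | ∃ f : X → ℝ, 0 < ∑ x, gam Q f x * pr x ∧
        r = (∑ x, gam2 Q f x * pr x) / (∑ x, gam Q f x * pr x)} with hSset
  set s : X → ℝ := fun x => Real.sqrt (pr x) with hsdef
  have hs_pos : ∀ x, 0 < s x := fun x => Real.sqrt_pos.2 (hpr x)
  have hs_sq : ∀ x, s x * s x = pr x := fun x => Real.mul_self_sqrt (hpr x).le
  set A : X → X → ℝ := fun x y => s x * Q x y / s y with hAdef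
  have hA_apply : ∀ x y, A x y = s x * Q x y / s y := fun _ _ => rfl
  have hA_symm : ∀ x y, A x y = A y x := by
    intro x y
    rw [hA_apply, hA_apply, div_eq_div_iff (hs_pos y).ne' (hs_pos x).ne']
    linear_combination Q x y * hs_sq x - Q y x * hs_sq y + hrev x y
  set T : EuclideanSpace ℝ X →ₗ[ℝ] EuclideanSpace ℝ X :=
    { toFun := fun v => WithLp.toLp 2 (fun x => v x - ∑ y, A x y * v y : X → ℝ),
      map_add' := fun v w => PiLp.ext fun x => by
        show (v x + w x) - ∑ y, A x y * (v y + w y)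
            = (v x - ∑ y, A x y * v y) + (w x - ∑ y, A x y * w y)
        rw [show (∑ y, A x y * (v y + w y)) = ∑ y, (A x y * v y + A x y * w y) from
          Finset.sum_congr rfl fun y _ => by ring, Finset.sum_add_distrib]
        ring
      map_smul' := fun c v => PiLp.ext fun x => by
        show (c * v x) - ∑ y, A x y * (c * v y) = c * (v x - ∑ y, A x y * v y)
        rw [mul_sub, Finset.mul_sum]
        congr 1
        exact Finset.sum_congr rfl fun y _ => by ring } with hTdef
  have hT_apply : ∀ (v : EuclideanSpace ℝ X) (x : X), T v x = v x - ∑ y, A x y * v y :=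
    fun v x => rfl
  have hinner : ∀ v w : EuclideanSpace ℝ X, ⟪v, w⟫ = ∑ x, v x * w x := by
    intro v w
    rw [PiLp.inner_apply]
    exact Finset.sum_congr rfl fun x _ => by simp only [RCLike.inner_apply, conj_trivial, mul_comm]
  have hdouble : ∀ p q : X → ℝ, ∑ x, ∑ y, A x y * p y * q x = ∑ x, ∑ y, A x y * q y * p x := by
    intro p q
    rw [Finset.sum_comm]
    refine Finset.sum_congr rfl fun y _ => Finset.sum_congr rfl fun x _ => ?_
    rw [hA_symm x y]; ring
  have hsym : T.IsSymmetric := by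
    intro v w
    rw [hinner, hinner]
    have e1 : ∀ x : X, T v x * w x = v x * w x - ∑ y, A x y * v y * w x := by
      intro x; rw [hT_apply, sub_mul, Finset.sum_mul]
    have e2 : ∀ x : X, v x * T w x = v x * w x - ∑ y, A x y * w y * v x := by
      intro x
      rw [hT_apply, mul_sub, Finset.mul_sum]
      congr 1
      exact Finset.sum_congr rfl fun y _ => by ring
    simp only [e1, e2]
    rw [Finset.sum_sub_distrib, Finset.sum_sub_distrib, hdouble v w]
  set vOf : (X → ℝ) → EuclideanSpace ℝ X := fun f => WithLp.toLp 2 (fun x => s x * f x : X → ℝ) with hvOf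
  have hvOf_apply : ∀ (f : X → ℝ) (x : X), vOf f x = s x * f x := fun _ _ => rfl
  have hTv : ∀ (f : X → ℝ) (x : X), T (vOf f) x = -(s x * lap Q f x) := by
    intro f x
    have e : ∑ y, A x y * (s y * f y) = s x * ∑ y, Q x y * f y := by
      rw [Finset.mul_sum]
      refine Finset.sum_congr rfl fun y _ => ?_
      rw [hA_apply]
      have := (hs_pos y).ne'
      field_simp
    rw [hT_apply (vOf f) x]
    show s x * f x - ∑ y, A x y * (s y * f y) = -(s x * lap Q f x)
    rw [e, lap_eq Q hQrow]
    ring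
  have key1 : ∀ f : X → ℝ, ⟪vOf f, T (vOf f)⟫ = ∑ x, gam Q f x * pr x := by
    intro f
    rw [hinner, gam_sum Q pr hQrow hrev, ← Finset.sum_neg_distrib]
    refine Finset.sum_congr rfl fun x _ => ?_
    rw [hTv f x, hvOf_apply, ← hs_sq x]
    ring
  have key2 : ∀ f : X → ℝ, ⟪T (vOf f), T (vOf f)⟫ = ∑ x, gam2 Q f x * pr x := by
    intro f
    rw [hinner, gam2_sum Q pr hQrow hrev]
    refine Finset.sum_congr rfl fun x _ => ?_
    rw [hTv f x, ← hs_sq x]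
    ring
  have hgam_nonneg : ∀ f : X → ℝ, 0 ≤ ∑ x, gam Q f x * pr x := by
    intro f
    refine Finset.sum_nonneg fun x _ => mul_nonneg ?_ (hpr x).le
    rw [gam_pointwise]
    have h0 : 0 ≤ ∑ y, Q x y * (f y - f x)^2 :=
      Finset.sum_nonneg fun y _ => mul_nonneg (hQ x y) (sq_nonneg _)
    linarith
  have hmu : ∀ (μ : ℝ) (w : EuclideanSpace ℝ X), w ≠ 0 → T w = μ • w → 0 ≤ μ * (μ - lam) := by
    intro μ w hw0 hTw
    set f : X → ℝ := fun x => w x / s x with hfdef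
    have hwf : vOf f = w := PiLp.ext fun x => by
      show s x * (w x / s x) = w x
      rw [mul_comm, div_mul_cancel₀ _ (hs_pos x).ne']
    have hlapf : ∀ x, lap Q f x = -(μ * f x) := by
      intro x
      have h1 : T w x = μ * w x := by rw [hTw]; rfl
      rw [← hwf, hTv f x, hvOf_apply] at h1
      have h3 : s x * (lap Q f x) = s x * (-(μ * f x)) := by linear_combination -h1
      exact mul_left_cancel₀ (hs_pos x).ne' h3
    have hf0 : f ≠ 0 := by
      intro hf
      apply hw0
      rw [← hwf, hf]
      refine PiLp.ext fun x => ?_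
      exact mul_zero (s x)
    have hposw : 0 < ⟪w, w⟫ := by
      have h0 : (0:ℝ) ≤ ⟪w, w⟫ := real_inner_self_nonneg
      rcases h0.lt_or_eq with h | h
      · exact h
      · exact absurd (inner_self_eq_zero.1 h.symm) hw0
    have hwT : ⟪w, T w⟫ = μ * ⟪w, w⟫ := by rw [hTw, real_inner_smul_right]
    have hnn : 0 ≤ μ * ⟪w, w⟫ := by
      rw [← hwT, ← hwf, key1 f]
      exact hgam_nonneg f
    have hmu0 : 0 ≤ μ := by
      by_contra hcon
      push_neg at hcon
      nlinarith
    rcases eq_or_lt_of_le hmu0 with h | h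
    · rw [← h, zero_mul]
    · have hle := hlam_min μ h ⟨f, hf0, hlapf⟩
      nlinarith
  obtain ⟨g, hg0, hge⟩ := hlam_eig
  obtain ⟨x0, hx0⟩ := Function.ne_iff.1 hg0
  have hx0' : g x0 ≠ 0 := by simpa using hx0
  have hgsq : 0 < ∑ x, g x ^ 2 * pr x :=
    Finset.sum_pos' (fun x _ => mul_nonneg (sq_nonneg _) (hpr x).le)
      ⟨x0, Finset.mem_univ x0, mul_pos (sq_pos_of_ne_zero hx0') (hpr x0)⟩
  have hGg : ∑ x, gam Q g x * pr x = lam * ∑ x, g x ^ 2 * pr x := by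
    rw [gam_sum Q pr hQrow hrev, Finset.mul_sum, ← Finset.sum_neg_distrib]
    refine Finset.sum_congr rfl fun x _ => ?_
    rw [hge x]; ring
  have hG2g : ∑ x, gam2 Q g x * pr x = lam ^ 2 * ∑ x, g x ^ 2 * pr x := by
    rw [gam2_sum Q pr hQrow hrev, Finset.mul_sum]
    refine Finset.sum_congr rfl fun x _ => ?_
    rw [hge x]; ring
  have hmem : lam ∈ Sset := by
    rw [hSset]
    refine ⟨g, ?_, ?_⟩
    · rw [hGg]; exact mul_pos hlam_pos hgsq
    · rw [hGg, hG2g, eq_div_iff (mul_pos hlam_pos hgsq).ne']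
      ring
  have hlb : ∀ r ∈ Sset, lam ≤ r := by
    rintro r hr
    rw [hSset] at hr
    obtain ⟨f, hfpos, rfl⟩ := hr
    rw [le_div_iff₀ hfpos]
    have h := spectral_ineq T hsym lam hmu (vOf f)
    rw [key1 f, key2 f] at h
    linarith
  exact le_antisymm (csInf_le ⟨lam, hlb⟩ hmem) (le_csInf ⟨lam, hmem⟩ hlb)
end

section
/- (Cheeger constant as ℓ¹-Rayleigh quotient) Let (X,Q,π) be a finite Markov chain and let h ≥ 0 be such that for every subset W ⊆ X with Σ_{x ∈ W} π(x) ≤ 1/2 one has Σ_{x ∈ W, y ∉ W} Q(x,y)π(x) ≥ h · Σ_{x ∈ W} π(x) (i.e. h is a lower bound for the Cheeger constant h(X) = inf_{π(W) ≤ 1/2} |∂W|/π(W)). Then every f : X → ℝ with Σ_x f(x)π(x) = 0 satisfies ½ Σ_{x,y} |f(y) − f(x)| Q(x,y)π(x) ≥ (h/2) Σ_x |f(x)| π(x), i.e. ‖∇f‖₁ ≥ (h(X)/2) ‖f‖₁. -/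
set_option maxHeartbeats 1000000


open Finset MeasureTheory

/-! Auxiliary lemmas about the step function `χ c t = if t < c then 1 else 0`. -/

lemma chi_anti (c : ℝ) : Antitone (fun t => if t < c then (1:ℝ) else 0) := by
  intro a b hab
  by_cases hb : b < c
  · simp [hb, lt_of_le_of_lt hab hb]
  · by_cases ha : a < c <;> simp [ha, hb]

lemma chi_intable (c a b : ℝ) :
    IntervalIntegrable (fun t => if t < c then (1:ℝ) else 0) volume a b :=
  (chi_anti c).intervalIntegrable

lemma chi_integral {c M : ℝ} (hc : 0 ≤ c) (hM : c ≤ M) :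
    ∫ t in (0:ℝ)..M, (if t < c then (1:ℝ) else 0) = c := by
  have h0M : (0:ℝ) ≤ M := le_trans hc hM
  rw [intervalIntegral.integral_of_le h0M]
  have he : (fun t => if t < c then (1:ℝ) else 0)
      = Set.indicator (Set.Iio c) (fun _ => (1:ℝ)) := by
    ext t; by_cases h : t < c <;> simp [h, Set.indicator]
  rw [he, MeasureTheory.setIntegral_indicator measurableSet_Iio]
  have hs : Set.Ioc 0 M ∩ Set.Iio c = Set.Ioo 0 c := by
    ext t
    constructor
    · rintro ⟨⟨h1, h2⟩, h3⟩; exact ⟨h1, h3⟩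
    · rintro ⟨h1, h2⟩; exact ⟨⟨h1, le_trans (le_of_lt h2) hM⟩, h2⟩
  rw [hs]
  simp [Real.volume_Ioo, ENNReal.toReal_ofReal hc, hc]

lemma chi_abs_sub (a b t : ℝ) :
    |(if t < b then (1:ℝ) else 0) - (if t < a then 1 else 0)|
      = (if t < max a b then (1:ℝ) else 0) - (if t < min a b then 1 else 0) := by
  by_cases h1 : t < a <;> by_cases h2 : t < b <;>
    simp [h1, h2, lt_min_iff, lt_max_iff, zero_sub, abs_neg]

lemma chi_abs_intable (a b c d : ℝ) :
    IntervalIntegrable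
      (fun t => |(if t < b then (1:ℝ) else 0) - (if t < a then 1 else 0)|) volume c d := by
  have he : (fun t => |(if t < b then (1:ℝ) else 0) - (if t < a then 1 else 0)|)
      = fun t => (if t < max a b then (1:ℝ) else 0) - (if t < min a b then 1 else 0) :=
    funext (chi_abs_sub a b)
  rw [he]
  exact (chi_intable _ _ _).sub (chi_intable _ _ _)

lemma chi_integral_abs {a b M : ℝ} (ha : 0 ≤ a) (hb : 0 ≤ b) (haM : a ≤ M) (hbM : b ≤ M) :
    ∫ t in (0:ℝ)..M, |(if t < b then (1:ℝ) else 0) - (if t < a then 1 else 0)| = |b - a| := by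
  simp_rw [chi_abs_sub]
  rw [intervalIntegral.integral_sub (chi_intable _ _ _) (chi_intable _ _ _),
      chi_integral (le_trans ha (le_max_left a b)) (max_le haM hbM),
      chi_integral (le_min ha hb) (le_trans (min_le_left a b) haM)]
  exact max_sub_min_eq_abs a b

lemma intable_fun_sum {ι : Type*} (s : Finset ι) (F : ι → ℝ → ℝ) (a b : ℝ)
    (hF : ∀ i ∈ s, IntervalIntegrable (F i) volume a b) :
    IntervalIntegrable (fun t => ∑ i ∈ s, F i t) volume a b := by
  have e : (fun t => ∑ i ∈ s, F i t) = ∑ i ∈ s, F i := by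
    ext t; simp
  rw [e]
  exact IntervalIntegrable.sum s hF

/-- Pointwise level-set inequality: at each threshold `t ≥ 0`, applying the Cheeger
hypothesis to the super-level set of `g`. -/
lemma cheeger_pointwise {X : Type*} [Fintype X] [DecidableEq X]
    (Q : X → X → ℝ) (pr : X → ℝ)
    (hpr : ∀ x, 0 < pr x)
    (hrev : ∀ x y, pr x * Q x y = pr y * Q y x)
    (h : ℝ)
    (hcheeger : ∀ W : Finset X, ∑ x ∈ W, pr x ≤ 1/2 →
      h * ∑ x ∈ W, pr x ≤ ∑ x ∈ W, ∑ y ∈ Wᶜ, Q x y * pr x)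
    (g : X → ℝ)
    (hsupp : ∑ x ∈ univ.filter (fun x => 0 < g x), pr x ≤ 1/2)
    (t : ℝ) (ht : 0 ≤ t) :
    h * ∑ x, (if t < g x then (1:ℝ) else 0) * pr x
      ≤ (1/2) * ∑ x, ∑ y,
          |(if t < g y then (1:ℝ) else 0) - (if t < g x then 1 else 0)| * (Q x y * pr x) := by
  classical
  set W : Finset X := univ.filter (fun x => t < g x) with hW
  have hmemW : ∀ x : X, x ∈ W ↔ t < g x := by intro x; simp [hW]
  have hmemWc : ∀ x : X, x ∈ Wᶜ ↔ ¬ t < g x := by intro x; simp [hW]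
  have h1 : ∑ x, (if t < g x then (1:ℝ) else 0) * pr x = ∑ x ∈ W, pr x := by
    rw [hW, Finset.sum_filter]
    exact Finset.sum_congr rfl fun x _ => by by_cases hx : t < g x <;> simp [hx]
  have hW12 : ∑ x ∈ W, pr x ≤ 1/2 := by
    refine le_trans (Finset.sum_le_sum_of_subset_of_nonneg ?_ fun x _ _ => (hpr x).le) hsupp
    intro x hx
    simp only [hW, Finset.mem_filter, Finset.mem_univ, true_and] at hx ⊢
    exact lt_of_le_of_lt ht hx
  -- compute the double sum as twice the boundary
  have h2 : ∑ x, ∑ y,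
      |(if t < g y then (1:ℝ) else 0) - (if t < g x then 1 else 0)| * (Q x y * pr x)
      = 2 * ∑ x ∈ W, ∑ y ∈ Wᶜ, Q x y * pr x := by
    have hsplit : ∀ F : X → ℝ, ∑ x, F x = ∑ x ∈ W, F x + ∑ x ∈ Wᶜ, F x :=
      fun F => (Finset.sum_add_sum_compl W F).symm
    rw [hsplit]
    have hin : ∑ x ∈ W, ∑ y,
        |(if t < g y then (1:ℝ) else 0) - (if t < g x then 1 else 0)| * (Q x y * pr x)
        = ∑ x ∈ W, ∑ y ∈ Wᶜ, Q x y * pr x := by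
      refine Finset.sum_congr rfl fun x hx => ?_
      have hgx : t < g x := (hmemW x).mp hx
      rw [hsplit]
      have hz : ∑ y ∈ W,
          |(if t < g y then (1:ℝ) else 0) - (if t < g x then 1 else 0)| * (Q x y * pr x) = 0 := by
        refine Finset.sum_eq_zero fun y hy => ?_
        have hgy : t < g y := (hmemW y).mp hy
        simp [hgx, hgy]
      rw [hz, zero_add]
      refine Finset.sum_congr rfl fun y hy => ?_
      have hgy : ¬ t < g y := (hmemWc y).mp hy
      simp [hgx, hgy]
    have hout : ∑ x ∈ Wᶜ, ∑ y,
        |(if t < g y then (1:ℝ) else 0) - (if t < g x then 1 else 0)| * (Q x y * pr x)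
        = ∑ x ∈ W, ∑ y ∈ Wᶜ, Q x y * pr x := by
      have step1 : ∑ x ∈ Wᶜ, ∑ y,
          |(if t < g y then (1:ℝ) else 0) - (if t < g x then 1 else 0)| * (Q x y * pr x)
          = ∑ x ∈ Wᶜ, ∑ y ∈ W, Q x y * pr x := by
        refine Finset.sum_congr rfl fun x hx => ?_
        have hgx : ¬ t < g x := (hmemWc x).mp hx
        rw [hsplit]
        have hz : ∑ y ∈ Wᶜ,
            |(if t < g y then (1:ℝ) else 0) - (if t < g x then 1 else 0)| * (Q x y * pr x) = 0 := by
          refine Finset.sum_eq_zero fun y hy => ?_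
          have hgy : ¬ t < g y := (hmemWc y).mp hy
          simp [hgx, hgy]
        rw [hz, add_zero]
        refine Finset.sum_congr rfl fun y hy => ?_
        have hgy : t < g y := (hmemW y).mp hy
        simp [hgx, hgy]
      rw [step1, Finset.sum_comm]
      refine Finset.sum_congr rfl fun y _ => Finset.sum_congr rfl fun x _ => ?_
      rw [mul_comm (Q x y) (pr x), hrev x y, mul_comm (pr y) (Q y x)]
    rw [hin, hout]; ring
  rw [h1, h2]
  have := hcheeger W hW12
  linarith

/-- Core inequality for nonnegative `g` supported on a set of measure `≤ 1/2`. -/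
lemma cheeger_core {X : Type*} [Fintype X] [DecidableEq X]
    (Q : X → X → ℝ) (pr : X → ℝ)
    (hpr : ∀ x, 0 < pr x)
    (hrev : ∀ x y, pr x * Q x y = pr y * Q y x)
    (h : ℝ)
    (hcheeger : ∀ W : Finset X, ∑ x ∈ W, pr x ≤ 1/2 →
      h * ∑ x ∈ W, pr x ≤ ∑ x ∈ W, ∑ y ∈ Wᶜ, Q x y * pr x)
    (g : X → ℝ) (hg0 : ∀ x, 0 ≤ g x)
    (hsupp : ∑ x ∈ univ.filter (fun x => 0 < g x), pr x ≤ 1/2) :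
    h * ∑ x, g x * pr x ≤ (1/2) * ∑ x, ∑ y, |g y - g x| * (Q x y * pr x) := by
  classical
  set M : ℝ := (∑ x, g x) + 1 with hM
  have hsum0 : 0 ≤ ∑ x, g x := Finset.sum_nonneg fun x _ => hg0 x
  have h0M : (0:ℝ) ≤ M := by rw [hM]; linarith
  have hMg : ∀ x, g x ≤ M := fun x => by
    have := Finset.single_le_sum (fun i _ => hg0 i) (Finset.mem_univ x)
    rw [hM]; linarith
  -- integrability of the two integrands
  have hintL : IntervalIntegrable
      (fun t => h * ∑ x, (if t < g x then (1:ℝ) else 0) * pr x) volume 0 M := by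
    refine IntervalIntegrable.const_mul ?_ h
    exact intable_fun_sum univ _ 0 M fun x _ => (chi_intable (g x) 0 M).mul_const (pr x)
  have hintR : IntervalIntegrable
      (fun t => (1/2) * ∑ x, ∑ y,
        |(if t < g y then (1:ℝ) else 0) - (if t < g x then 1 else 0)| * (Q x y * pr x))
      volume 0 M := by
    refine IntervalIntegrable.const_mul ?_ _
    refine intable_fun_sum univ _ 0 M fun x _ => ?_
    exact intable_fun_sum univ _ 0 M fun y _ =>
      (chi_abs_intable (g x) (g y) 0 M).mul_const (Q x y * pr x)
  -- values of the two integrals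
  have hL : ∫ t in (0:ℝ)..M, (h * ∑ x, (if t < g x then (1:ℝ) else 0) * pr x)
      = h * ∑ x, g x * pr x := by
    rw [intervalIntegral.integral_const_mul]
    congr 1
    rw [intervalIntegral.integral_finset_sum
      (fun x _ => (chi_intable (g x) 0 M).mul_const (pr x))]
    refine Finset.sum_congr rfl fun x _ => ?_
    rw [intervalIntegral.integral_mul_const, chi_integral (hg0 x) (hMg x)]
  have hR : ∫ t in (0:ℝ)..M, ((1/2) * ∑ x, ∑ y,
      |(if t < g y then (1:ℝ) else 0) - (if t < g x then 1 else 0)| * (Q x y * pr x))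
      = (1/2) * ∑ x, ∑ y, |g y - g x| * (Q x y * pr x) := by
    rw [intervalIntegral.integral_const_mul]
    congr 1
    rw [intervalIntegral.integral_finset_sum
      (fun x _ => intable_fun_sum univ _ 0 M fun y _ =>
        (chi_abs_intable (g x) (g y) 0 M).mul_const (Q x y * pr x))]
    refine Finset.sum_congr rfl fun x _ => ?_
    rw [intervalIntegral.integral_finset_sum
      (fun y _ => (chi_abs_intable (g x) (g y) 0 M).mul_const (Q x y * pr x))]
    refine Finset.sum_congr rfl fun y _ => ?_
    rw [intervalIntegral.integral_mul_const,
        chi_integral_abs (hg0 x) (hg0 y) (hMg x) (hMg y)]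
  calc h * ∑ x, g x * pr x
      = ∫ t in (0:ℝ)..M, (h * ∑ x, (if t < g x then (1:ℝ) else 0) * pr x) := hL.symm
    _ ≤ ∫ t in (0:ℝ)..M, ((1/2) * ∑ x, ∑ y,
          |(if t < g y then (1:ℝ) else 0) - (if t < g x then 1 else 0)| * (Q x y * pr x)) := by
        refine intervalIntegral.integral_mono_on h0M hintL hintR fun t ht => ?_
        exact cheeger_pointwise Q pr hpr hrev h hcheeger g hsupp t ht.1
    _ = (1/2) * ∑ x, ∑ y, |g y - g x| * (Q x y * pr x) := hR

/-- The key case: the positive part of `f` has mass at most `1/2`. -/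
lemma cheeger_key {X : Type*} [Fintype X] [DecidableEq X]
    (Q : X → X → ℝ) (pr : X → ℝ)
    (hQ : ∀ x y, 0 ≤ Q x y)
    (hpr : ∀ x, 0 < pr x)
    (hrev : ∀ x y, pr x * Q x y = pr y * Q y x)
    (h : ℝ)
    (hcheeger : ∀ W : Finset X, ∑ x ∈ W, pr x ≤ 1/2 →
      h * ∑ x ∈ W, pr x ≤ ∑ x ∈ W, ∑ y ∈ Wᶜ, Q x y * pr x)
    (f : X → ℝ) (hf : (∑ x, f x * pr x) = 0)
    (hpos : ∑ x ∈ univ.filter (fun x => 0 < f x), pr x ≤ 1/2) :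
    (h / 2) * ∑ x, |f x| * pr x
      ≤ (1/2) * ∑ x, ∑ y, |f y - f x| * Q x y * pr x := by
  classical
  set g : X → ℝ := fun x => max (f x) 0 with hg
  have hg0 : ∀ x, 0 ≤ g x := fun x => le_max_right _ _
  have hsupp : ∑ x ∈ univ.filter (fun x => 0 < g x), pr x ≤ 1/2 := by
    have : (univ.filter (fun x => 0 < g x)) = univ.filter (fun x => 0 < f x) := by
      apply Finset.filter_congr
      intro x _
      simp [hg, lt_max_iff]
    rwa [this]
  have hcore := cheeger_core Q pr hpr hrev h hcheeger g hg0 hsupp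
  have habsf : ∀ x, |f x| = 2 * g x - f x := by
    intro x
    rcases le_total (f x) 0 with hx | hx
    · rw [abs_of_nonpos hx]; simp [hg, max_eq_right hx]
    · rw [abs_of_nonneg hx]; simp [hg, max_eq_left hx]; ring
  have hgf : ∑ x, g x * pr x = (1/2) * ∑ x, |f x| * pr x := by
    have : ∑ x, |f x| * pr x = 2 * ∑ x, g x * pr x - ∑ x, f x * pr x := by
      rw [Finset.mul_sum, ← Finset.sum_sub_distrib]
      refine Finset.sum_congr rfl fun x _ => ?_
      rw [habsf x]; ring
    rw [this, hf]; ring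
  have hmono : ∑ x, ∑ y, |g y - g x| * (Q x y * pr x)
      ≤ ∑ x, ∑ y, |f y - f x| * Q x y * pr x := by
    refine Finset.sum_le_sum fun x _ => Finset.sum_le_sum fun y _ => ?_
    rw [mul_assoc]
    refine mul_le_mul_of_nonneg_right ?_ (mul_nonneg (hQ x y) (hpr x).le)
    exact abs_max_sub_max_le_abs (f y) (f x) 0
  rw [hgf] at hcore
  linarith

/-- Cheeger constant as an `ℓ¹`-Rayleigh quotient: if `h` is a lower bound for
the Cheeger constant, i.e. `|∂W| ≥ h·π(W)` for all `W` with `π(W) ≤ 1/2`, then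
every `f` with `∑_x f(x)π(x) = 0` satisfies `‖∇f‖₁ ≥ (h/2)‖f‖₁`. -/
theorem cheeger_l1_rayleigh
    {X : Type*} [Fintype X] [DecidableEq X]
    (Q : X → X → ℝ) (pr : X → ℝ)
    (hQ : ∀ x y, 0 ≤ Q x y) (hQrow : ∀ x, ∑ y, Q x y = 1)
    (hpr : ∀ x, 0 < pr x) (hprsum : ∑ x, pr x = 1)
    (hrev : ∀ x y, pr x * Q x y = pr y * Q y x)
    (h : ℝ) (hh : 0 ≤ h)
    (hcheeger : ∀ W : Finset X, ∑ x ∈ W, pr x ≤ 1/2 →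
      h * ∑ x ∈ W, pr x ≤ ∑ x ∈ W, ∑ y ∈ Wᶜ, Q x y * pr x) :
    ∀ f : X → ℝ, (∑ x, f x * pr x) = 0 →
      (h / 2) * ∑ x, |f x| * pr x
        ≤ (1/2) * ∑ x, ∑ y, |f y - f x| * Q x y * pr x := by
  classical
  intro f hf
  by_cases hpos : ∑ x ∈ univ.filter (fun x => 0 < f x), pr x ≤ 1/2
  · exact cheeger_key Q pr hQ hpr hrev h hcheeger f hf hpos
  · push_neg at hpos
    have hneg : ∑ x ∈ univ.filter (fun x => 0 < -f x), pr x ≤ 1/2 := by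
      have hdisj : Disjoint (univ.filter (fun x => 0 < -f x))
          (univ.filter (fun x => 0 < f x)) := by
        rw [Finset.disjoint_left]
        intro x hx1 hx2
        simp only [Finset.mem_filter, Finset.mem_univ, true_and] at hx1 hx2
        linarith
      have hle : ∑ x ∈ (univ.filter (fun x => 0 < -f x)) ∪ (univ.filter (fun x => 0 < f x)),
          pr x ≤ 1 := by
        rw [← hprsum]
        exact Finset.sum_le_sum_of_subset_of_nonneg (Finset.subset_univ _)
          fun x _ _ => (hpr x).le
      rw [Finset.sum_union hdisj] at hle
      linarith
    have hf' : (∑ x, (-f) x * pr x) = 0 := by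
      simp only [Pi.neg_apply, neg_mul]
      rw [Finset.sum_neg_distrib, hf, neg_zero]
    have key := cheeger_key Q pr hQ hpr hrev h hcheeger (-f) hf' hneg
    have e1 : ∀ x : X, |(-f) x| = |f x| := fun x => abs_neg (f x)
    have e2 : ∀ x y : X, |(-f) y - (-f) x| = |f y - f x| := by
      intro x y
      simp only [Pi.neg_apply, neg_sub_neg]
      exact abs_sub_comm _ _
    simp_rw [e1, e2] at key
    exact key
end

section
/- (Heat kernel upper bound) Let (X,Q,π) be a finite Markov chain and let d denote the combinatorial graph distance on the underlying graph (x ∼ y iff x ≠ y and Q(x,y) > 0). Then for every natural number r, all t ≥ 0 and all x, y ∈ X with d(x,y) ≥ r: (P_t 𝟙_x)(y) ≤ t^r / r!, where 𝟙_x is the indicator function of x; equivalently, the heat kernel p_t(x,y) := (1/π(x)) (P_t 𝟙_x)(y) satisfies p_t(x,y) ≤ (1/π(x)) t^r/r!. -/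
open Finset

/-- The Laplacian as a linear map. -/
def lapL {X : Type*} [Fintype X] (Q : X → X → ℝ) : (X → ℝ) →ₗ[ℝ] (X → ℝ) where
  toFun := lap Q
  map_add' f g := by
    funext x
    simp only [lap, Pi.add_apply]
    rw [← Finset.sum_add_distrib]
    exact Finset.sum_congr rfl fun y _ => by ring
  map_smul' c f := by
    funext x
    simp only [lap, Pi.smul_apply, smul_eq_mul, RingHom.id_apply]
    rw [Finset.mul_sum]
    exact Finset.sum_congr rfl fun y _ => by ring

/-- The heat semigroup `P_t = e^{tΔ}`. -/
noncomputable def heat {X : Type*} [Fintype X] [DecidableEq X]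
    (Q : X → X → ℝ) (t : ℝ) (f : X → ℝ) : X → ℝ :=
  NormedSpace.exp (t • (LinearMap.toContinuousLinearMap (lapL Q))) f

/-- The underlying graph of the Markov chain: `x ∼ y` iff `x ≠ y` and
`Q(x,y) > 0` (reversibility makes this symmetric; we symmetrize explicitly). -/
def mcGraph {X : Type*} (Q : X → X → ℝ) : SimpleGraph X where
  Adj a b := a ≠ b ∧ 0 < Q a b ∧ 0 < Q b a
  symm := ⟨fun a b h => ⟨h.1.symm, h.2.2, h.2.1⟩⟩
  loopless := ⟨fun a h => h.1 rfl⟩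

/-- The averaging (Markov) operator `Mf(x) = ∑_y Q(x,y) f(y)` as a linear map. -/
def avgL {X : Type*} [Fintype X] (Q : X → X → ℝ) : (X → ℝ) →ₗ[ℝ] (X → ℝ) where
  toFun f := fun x => ∑ y, Q x y * f y
  map_add' f g := by
    funext x
    simp only [Pi.add_apply]
    rw [← Finset.sum_add_distrib]
    exact Finset.sum_congr rfl fun y _ => by ring
  map_smul' c f := by
    funext x
    simp only [Pi.smul_apply, smul_eq_mul, RingHom.id_apply]
    rw [Finset.mul_sum]
    exact Finset.sum_congr rfl fun y _ => by ring

lemma avgL_pow_apply_mem {X : Type*} [Fintype X] (Q : X → X → ℝ)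
    (hQ : ∀ x y, 0 ≤ Q x y) (hQrow : ∀ x, ∑ y, Q x y = 1)
    (f : X → ℝ) (hf0 : ∀ z, 0 ≤ f z) (hf1 : ∀ z, f z ≤ 1) (n : ℕ) :
    ∀ z, 0 ≤ ((LinearMap.toContinuousLinearMap (avgL Q)) ^ n) f z ∧
      ((LinearMap.toContinuousLinearMap (avgL Q)) ^ n) f z ≤ 1 := by
  induction n with
  | zero => intro z; simpa using ⟨hf0 z, hf1 z⟩
  | succ n ih =>
    intro z
    have hrw : ((LinearMap.toContinuousLinearMap (avgL Q)) ^ (n + 1)) f z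
        = ∑ w, Q z w * (((LinearMap.toContinuousLinearMap (avgL Q)) ^ n) f w) := by
      rw [pow_succ']
      rfl
    constructor
    · rw [hrw]
      exact Finset.sum_nonneg fun w _ => mul_nonneg (hQ z w) (ih w).1
    · rw [hrw]
      calc ∑ w, Q z w * (((LinearMap.toContinuousLinearMap (avgL Q)) ^ n) f w)
          ≤ ∑ w, Q z w * 1 :=
            Finset.sum_le_sum fun w _ => mul_le_mul_of_nonneg_left (ih w).2 (hQ z w)
        _ = 1 := by simp [hQrow z]

lemma avgL_pow_apply_vanish {X : Type*} [Fintype X] [DecidableEq X] (Q : X → X → ℝ)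
    (pr : X → ℝ) (hQ : ∀ x y, 0 ≤ Q x y) (hpr : ∀ x, 0 < pr x)
    (hrev : ∀ x y, pr x * Q x y = pr y * Q y x) (x : X) (n : ℕ) :
    ∀ z, (∀ p : (mcGraph Q).Walk x z, n < p.length) →
      ((LinearMap.toContinuousLinearMap (avgL Q)) ^ n)
        (fun w => if w = x then (1:ℝ) else 0) z = 0 := by
  induction n with
  | zero =>
    intro z hz
    have hzx : z ≠ x := by
      intro h
      subst h
      exact absurd ((hz SimpleGraph.Walk.nil)) (by simp)
    simpa [hzx]
  | succ n ih =>
    intro z hz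
    have hrw : ((LinearMap.toContinuousLinearMap (avgL Q)) ^ (n + 1))
          (fun w => if w = x then (1:ℝ) else 0) z
        = ∑ w, Q z w * (((LinearMap.toContinuousLinearMap (avgL Q)) ^ n)
            (fun w => if w = x then (1:ℝ) else 0) w) := by
      rw [pow_succ']
      rfl
    rw [hrw]
    refine Finset.sum_eq_zero fun w _ => ?_
    rcases eq_or_lt_of_le (hQ z w) with h0 | hpos
    · rw [← h0, zero_mul]
    rw [ih w ?_, mul_zero]
    intro p
    by_cases hwz : w = z
    · subst hwz
      exact Nat.lt_of_succ_lt (hz p)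
    · have hQwz : 0 < Q w z := by
        have h1 : 0 < pr w * Q w z := by rw [← hrev z w]; exact mul_pos (hpr z) hpos
        nlinarith [hpr w]
      have hadj : (mcGraph Q).Adj w z := ⟨hwz, hQwz, hpos⟩
      have := hz (p.concat hadj)
      rwa [SimpleGraph.Walk.length_concat, Nat.succ_lt_succ_iff] at this

set_option synthInstance.maxHeartbeats 1000000 in
set_option maxHeartbeats 2000000 in
/-- Heat kernel upper bound: if `d(x,y) ≥ r` (every walk from `x` to `y` in the
underlying graph has length at least `r`) then `(P_t 𝟙_x)(y) ≤ t^r/r!`;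
equivalently `p_t(x,y) = (1/π(x))(P_t 𝟙_x)(y) ≤ (1/π(x)) t^r/r!`. -/
theorem heat_kernel_upper_bound
    {X : Type*} [Fintype X] [DecidableEq X]
    (Q : X → X → ℝ) (pr : X → ℝ)
    (hQ : ∀ x y, 0 ≤ Q x y) (hQrow : ∀ x, ∑ y, Q x y = 1)
    (hpr : ∀ x, 0 < pr x) (hprsum : ∑ x, pr x = 1)
    (hrev : ∀ x y, pr x * Q x y = pr y * Q y x)
    (r : ℕ) (t : ℝ) (ht : 0 ≤ t) (x y : X)
    (hdist : ∀ p : (mcGraph Q).Walk x y, r ≤ p.length) :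
    heat Q t (fun z => if z = x then (1:ℝ) else 0) y ≤ t^r / (Nat.factorial r)
    ∧ (1 / pr x) * heat Q t (fun z => if z = x then (1:ℝ) else 0) y
        ≤ (1 / pr x) * (t^r / (Nat.factorial r)) := by
  set ind : X → ℝ := fun z => if z = x then (1:ℝ) else 0 with hind
  set L := LinearMap.toContinuousLinearMap (lapL Q) with hL
  set M := LinearMap.toContinuousLinearMap (avgL Q) with hM
  -- Splitting the generator
  have hsplit : t • L = (-t) • (1 : (X → ℝ) →L[ℝ] (X → ℝ)) + t • M := by
    ext f z
    show t * ∑ w, Q z w * (f w - f z) = -t * f z + t * ∑ w, Q z w * f w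
    have : ∑ w, Q z w * (f w - f z) = (∑ w, Q z w * f w) - (∑ w, Q z w) * f z := by
      rw [Finset.sum_mul, ← Finset.sum_sub_distrib]
      exact Finset.sum_congr rfl fun w _ => by ring
    rw [this, hQrow z]; ring
  have hcomm : Commute ((-t) • (1 : (X → ℝ) →L[ℝ] (X → ℝ))) (t • M) :=
    ((Commute.one_left (t • M)).smul_left (-t))
  have h1 : NormedSpace.exp ((-t) • (1 : (X → ℝ) →L[ℝ] (X → ℝ)))
      = Real.exp (-t) • 1 := by
    have h := NormedSpace.algebraMap_exp_comm (𝔸 := (X → ℝ) →L[ℝ] (X → ℝ)) (-t)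
    rw [Algebra.algebraMap_eq_smul_one, Algebra.algebraMap_eq_smul_one] at h
    rw [← h, Real.exp_eq_exp_ℝ]
  have hheat : heat Q t ind y = Real.exp (-t) * (NormedSpace.exp (t • M) ind y) := by
    show (NormedSpace.exp (t • L)) ind y = _
    rw [hsplit, NormedSpace.exp_add_of_commute_of_mem_ball (𝕂 := ℝ) hcomm
        ((NormedSpace.expSeries_radius_eq_top ℝ ((X → ℝ) →L[ℝ] (X → ℝ))).symm ▸ edist_lt_top _ _)
        ((NormedSpace.expSeries_radius_eq_top ℝ ((X → ℝ) →L[ℝ] (X → ℝ))).symm ▸ edist_lt_top _ _), h1, smul_mul_assoc, one_mul,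
      ContinuousLinearMap.smul_apply]
    rfl
  -- Evaluate the exponential series
  set a : ℕ → ℝ := fun n => ((M ^ n) ind y) with ha
  have hsumop := NormedSpace.expSeries_summable' (𝕂 := ℝ) (t • M)
  have hexp_eval : NormedSpace.exp (t • M) ind y
      = ∑' n : ℕ, ((n.factorial : ℝ))⁻¹ * (t ^ n * a n) := by
    set E : ((X → ℝ) →L[ℝ] (X → ℝ)) →L[ℝ] ℝ :=
      (ContinuousLinearMap.proj y).comp ((ContinuousLinearMap.apply ℝ (X → ℝ)) ind) with hE
    have hEapp : ∀ A : (X → ℝ) →L[ℝ] (X → ℝ), E A = A ind y := fun A => rfl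
    calc NormedSpace.exp (t • M) ind y
        = E (NormedSpace.exp (t • M)) := rfl
      _ = E (∑' n : ℕ, ((n.factorial : ℝ))⁻¹ • (t • M) ^ n) := by
          rw [NormedSpace.exp_eq_tsum ℝ]
      _ = ∑' n : ℕ, E (((n.factorial : ℝ))⁻¹ • (t • M) ^ n) := E.map_tsum hsumop
      _ = ∑' n : ℕ, ((n.factorial : ℝ))⁻¹ * (t ^ n * a n) := by
          refine tsum_congr fun n => ?_
          rw [hEapp, ContinuousLinearMap.smul_apply, smul_pow, ContinuousLinearMap.smul_apply]
          simp [ha, smul_eq_mul, mul_assoc]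
  -- facts about a
  have ha01 : ∀ n, 0 ≤ a n ∧ a n ≤ 1 := fun n =>
    avgL_pow_apply_mem Q hQ hQrow ind
      (fun z => by by_cases h : z = x <;> simp [hind, h])
      (fun z => by by_cases h : z = x <;> simp [hind, h]) n y
  have havanish : ∀ n, n < r → a n = 0 := fun n hn =>
    avgL_pow_apply_vanish Q pr hQ hpr hrev x n y
      (fun p => lt_of_lt_of_le hn (hdist p))
  -- series comparison
  set c : ℕ → ℝ := fun n => ((n.factorial : ℝ))⁻¹ * (t ^ n * a n) with hc
  set d : ℕ → ℝ := fun n => if n < r then 0 else t ^ n / (n.factorial : ℝ) with hd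
  have hg : Summable fun n : ℕ => t ^ n / (n.factorial : ℝ) :=
    Real.summable_pow_div_factorial t
  have hg_nonneg : ∀ n : ℕ, (0:ℝ) ≤ t ^ n / (n.factorial : ℝ) := fun n =>
    div_nonneg (pow_nonneg ht n) (Nat.cast_nonneg _)
  have hcle : ∀ n, c n ≤ d n := by
    intro n
    by_cases hn : n < r
    · simp [hc, hd, hn, havanish n hn]
    · simp only [hc, hd, if_neg hn]
      calc ((n.factorial : ℝ))⁻¹ * (t ^ n * a n)
          ≤ ((n.factorial : ℝ))⁻¹ * (t ^ n * 1) := by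
            apply mul_le_mul_of_nonneg_left _ (by positivity)
            exact mul_le_mul_of_nonneg_left (ha01 n).2 (pow_nonneg ht n)
        _ = t ^ n / (n.factorial : ℝ) := by rw [mul_one, div_eq_inv_mul]
  have hc_nonneg : ∀ n, 0 ≤ c n := fun n => by
    have := (ha01 n).1
    positivity
  have hd_le_g : ∀ n, d n ≤ t ^ n / (n.factorial : ℝ) := fun n => by
    by_cases hn : n < r <;> simp [hd, hn, hg_nonneg n]
  have hd_nonneg : ∀ n, 0 ≤ d n := fun n => by
    by_cases hn : n < r <;> simp [hd, hn, hg_nonneg n]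
  have hsd : Summable d := Summable.of_nonneg_of_le hd_nonneg hd_le_g hg
  have hsc : Summable c :=
    Summable.of_nonneg_of_le hc_nonneg (fun n => (hcle n).trans (hd_le_g n)) hg
  have h2 : ∑' n, c n ≤ ∑' n, d n := Summable.tsum_le_tsum hcle hsc hsd
  -- compute/bound tsum d
  have hshift : ∑' n, d n = ∑' i : ℕ, d (i + r) := by
    have := Summable.sum_add_tsum_nat_add (f := d) r hsd
    have hz : ∑ i ∈ Finset.range r, d i = 0 :=
      Finset.sum_eq_zero fun i hi => by simp [hd, Finset.mem_range.mp hi]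
    linarith [this]
  have hterm : ∀ i : ℕ, d (i + r) ≤ (t ^ r / (r.factorial : ℝ)) * (t ^ i / (i.factorial : ℝ)) := by
    intro i
    have hnr : ¬ (i + r < r) := by omega
    rw [hd]
    simp only [if_neg hnr]
    have hfac : ((r.factorial * i.factorial : ℕ) : ℝ) ≤ (((i + r).factorial : ℕ) : ℝ) := by
      exact_mod_cast Nat.le_of_dvd (Nat.factorial_pos _)
        (by have := Nat.factorial_mul_factorial_dvd_factorial_add r i
            rwa [add_comm i r])
    have hfacpos : (0:ℝ) < ((r.factorial * i.factorial : ℕ) : ℝ) := by positivity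
    calc t ^ (i + r) / ((i + r).factorial : ℝ)
        ≤ t ^ (i + r) / ((r.factorial * i.factorial : ℕ) : ℝ) := by
          apply div_le_div_of_nonneg_left (pow_nonneg ht _) hfacpos hfac
      _ = (t ^ r / (r.factorial : ℝ)) * (t ^ i / (i.factorial : ℝ)) := by
          rw [pow_add]
          push_cast
          field_simp
  have hsr : Summable fun i : ℕ => (t ^ r / (r.factorial : ℝ)) * (t ^ i / (i.factorial : ℝ)) :=
    hg.mul_left _
  have h3 : ∑' i : ℕ, d (i + r) ≤ (t ^ r / (r.factorial : ℝ)) * Real.exp t := by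
    have hexp_t : Real.exp t = ∑' i : ℕ, t ^ i / (i.factorial : ℝ) := by
      rw [Real.exp_eq_exp_ℝ, NormedSpace.exp_eq_tsum_div]
    calc ∑' i : ℕ, d (i + r)
        ≤ ∑' i : ℕ, (t ^ r / (r.factorial : ℝ)) * (t ^ i / (i.factorial : ℝ)) :=
          Summable.tsum_le_tsum hterm (hsd.comp_injective (add_left_injective r)) hsr
      _ = (t ^ r / (r.factorial : ℝ)) * ∑' i : ℕ, t ^ i / (i.factorial : ℝ) := tsum_mul_left
      _ = (t ^ r / (r.factorial : ℝ)) * Real.exp t := by rw [hexp_t]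
  have hmain : heat Q t ind y ≤ t ^ r / (r.factorial : ℝ) := by
    have hb : ∑' n, c n ≤ (t ^ r / (r.factorial : ℝ)) * Real.exp t := by
      rw [hshift] at h2; linarith
    have := mul_le_mul_of_nonneg_left hb (le_of_lt (Real.exp_pos (-t)))
    rw [hheat, hexp_eval]
    calc Real.exp (-t) * ∑' n, c n
        ≤ Real.exp (-t) * ((t ^ r / (r.factorial : ℝ)) * Real.exp t) := this
      _ = t ^ r / (r.factorial : ℝ) := by
          rw [Real.exp_neg]
          field_simp [Real.exp_ne_zero t]
  exact ⟨hmain, mul_le_mul_of_nonneg_left hmain (one_div_nonneg.mpr (hpr x).le)⟩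
end
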